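/- If a series ∑xₙ in a finite-dimensional real inner product space is *-potentially convergent (i.e., for every continuous linear functional f there is a permutation σ of ℕ such that ∑ f(x_{σ(n)}) converges), then the sequence (xₙ) converges to zero. -/

import Mathlib

open Filter Topology

theorem stmt0
    {X : Type*} [NormedAddCommGroup X] [InnerProductSpace ℝ X] [FiniteDimensional ℝ X]
    (x : ℕ → X)
    (hstar : ∀ f : X →L[ℝ] ℝ, ∃ σ : Equiv.Perm ℕ, ∃ r : ℝ,
      Tendsto (fun m => ∑ n ∈ Finset.range m, f (x (σ n))) atTop (𝓝 r)) :
    Tendsto x atTop (𝓝 0) := by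
  have hcoord : ∀ f : X →L[ℝ] ℝ, Tendsto (fun n => f (x n)) atTop (𝓝 0) := by
    intro f
    obtain ⟨σ, r, hσ⟩ := hstar f
    have h1 : Tendsto (fun n => f (x (σ n))) atTop (𝓝 0) := by
      have h2 := (hσ.comp (tendsto_add_atTop_nat 1)).sub hσ
      simp only [Function.comp, Finset.sum_range_succ, sub_self] at h2
      simpa using h2
    have hσinv : Tendsto (fun n => (σ.symm) n) atTop atTop := by
      rw [← Nat.cofinite_eq_atTop]
      exact σ.symm.injective.tendsto_cofinite
    have h3 := h1.comp hσinv
    simpa only [Function.comp_def, Equiv.apply_symm_apply] using h3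
  classical
  obtain ⟨s, ⟨b⟩⟩ := Module.Basis.exists_basis ℝ X
  haveI : Fintype s := (FiniteDimensional.fintypeBasisIndex b)
  have key : ∀ n, x n = ∑ i, b.repr (x n) i • b i := fun n => (b.sum_repr (x n)).symm
  have hsum : Tendsto (fun n => ∑ i, b.repr (x n) i • (b i : X)) atTop
      (𝓝 (∑ i : s, (0:ℝ) • (b i : X))) := by
    apply tendsto_finset_sum
    intro i _
    have hf := hcoord (LinearMap.toContinuousLinearMap (b.coord i))
    simp only [LinearMap.coe_toContinuousLinearMap', Module.Basis.coord_apply] at hf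
    exact hf.smul_const (b i)
  simp only [zero_smul, Finset.sum_const_zero] at hsum
  have : Tendsto x atTop (𝓝 0) := by
    convert hsum using 1
    funext n
    exact key n
  exact this
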